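/- Let E be a graph, R a unital commutative ring, and (H,S) an admissible pair in E. Then the ideal I(H,S) of the Leavitt path algebra L_R(E) generated by {v : v ∈ H} ∪ {v^H : v ∈ S} equals the R-linear span of {αβ* : α,β paths with r(α)=r(β) ∈ H} ∪ {α v^H β* : α,β paths with r(α)=r(β)=v ∈ S}, and I(H,S) is a self-adjoint graded ideal of L_R(E). -/

import Mathlib

structure LPGraph where
  V : Type
  E : Type
  s : E → V
  r : E → V

namespace LPGraph

/-- `v ≥ w`: there is a directed path (possibly trivial) from `v` to `w`. -/
def Reaches (G : LPGraph) (v w : G.V) : Prop :=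
  Relation.ReflTransGen (fun a b => ∃ e : G.E, G.s e = a ∧ G.r e = b) v w

def Hereditary (G : LPGraph) (X : Set G.V) : Prop :=
  ∀ e : G.E, G.s e ∈ X → G.r e ∈ X

def Saturated (G : LPGraph) (X : Set G.V) : Prop :=
  ∀ v : G.V, {e : G.E | G.s e = v}.Finite → {e : G.E | G.s e = v}.Nonempty →
    (∀ e : G.E, G.s e = v → G.r e ∈ X) → v ∈ X

/-- The saturation of `X`: the smallest saturated subset containing `X`. -/
def saturation (G : LPGraph) (X : Set G.V) : Set G.V :=
  ⋂₀ {S : Set G.V | G.Saturated S ∧ X ⊆ S}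

def tree (G : LPGraph) (v : G.V) : Set G.V := {w | G.Reaches v w}

def MT1 (G : LPGraph) (M : Set G.V) : Prop :=
  ∀ v w : G.V, w ∈ M → G.Reaches v w → v ∈ M

def MT2 (G : LPGraph) (M : Set G.V) : Prop :=
  ∀ v ∈ M, {e : G.E | G.s e = v}.Finite → {e : G.E | G.s e = v}.Nonempty →
    ∃ e : G.E, G.s e = v ∧ G.r e ∈ M

def MT3on (G : LPGraph) (M : Set G.V) : Prop :=
  ∀ v ∈ M, ∀ w ∈ M, ∃ y ∈ M, G.Reaches v y ∧ G.Reaches w y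

def MT3 (G : LPGraph) : Prop :=
  ∀ v w : G.V, ∃ y : G.V, G.Reaches v y ∧ G.Reaches w y

def Omega (G : LPGraph) (X : Set G.V) : Set G.V :=
  {w | w ∉ X ∧ ∀ v ∈ X, ¬ G.Reaches w v}

def OmegaV (G : LPGraph) (v : G.V) : Set G.V :=
  {w | w ≠ v ∧ ¬ G.Reaches w v}

end LPGraph

namespace LPGraph

def IsBifurcation (G : LPGraph) (v : G.V) : Prop :=
  ∃ e f : G.E, e ≠ f ∧ G.s e = v ∧ G.s f = v

def IsPathList (G : LPGraph) (l : List G.E) : Prop :=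
  l.Chain' (fun e f => G.r e = G.s f)

def IsClosedPath (G : LPGraph) (v : G.V) (l : List G.E) : Prop :=
  l ≠ [] ∧ G.IsPathList l ∧ (∀ e ∈ l.head?, G.s e = v) ∧ (∀ e ∈ l.getLast?, G.r e = v)

def IsClosedSimplePath (G : LPGraph) (v : G.V) (l : List G.E) : Prop :=
  G.IsClosedPath v l ∧ ∀ e ∈ l.tail, G.s e ≠ v

def ConditionK (G : LPGraph) : Prop :=
  ∀ v : G.V, (¬ ∃ l : List G.E, G.IsClosedPath v l) ∨
    (∃ l₁ l₂ : List G.E, G.IsClosedSimplePath v l₁ ∧ G.IsClosedSimplePath v l₂ ∧ l₁ ≠ l₂)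

def ConditionL (G : LPGraph) : Prop :=
  ∀ (v : G.V) (l : List G.E), G.IsClosedSimplePath v l →
    ∃ e ∈ l, ∃ f : G.E, f ≠ e ∧ G.s f = G.s e

/-- `v` is a line point: no vertex in the tree of `v` is a bifurcation or the base of a
closed path. -/
def LinePoint (G : LPGraph) (v : G.V) : Prop :=
  ∀ w : G.V, G.Reaches v w →
    ¬ G.IsBifurcation w ∧ ¬ ∃ l : List G.E, G.IsClosedPath w l

/-- `B_H`: vertices outside `H` emitting infinitely many edges, but finitely many
(and at least one) into `E⁰ \ H`. -/
def BH (G : LPGraph) (H : Set G.V) : Set G.V :=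
  {v | v ∉ H ∧ {e : G.E | G.s e = v}.Infinite ∧
    {e : G.E | G.s e = v ∧ G.r e ∉ H}.Finite ∧
    {e : G.E | G.s e = v ∧ G.r e ∉ H}.Nonempty}

/-- An admissible pair: `H` hereditary saturated, `S ⊆ B_H`. -/
def Admissible (G : LPGraph) (H S : Set G.V) : Prop :=
  G.Hereditary H ∧ G.Saturated H ∧ S ⊆ G.BH H

/-- Finite paths in `G`, indexed by source and range. -/
inductive Path (G : LPGraph) : G.V → G.V → Type
  | nil (v : G.V) : Path G v v
  | cons (e : G.E) {w : G.V} (p : Path G (G.r e) w) : Path G (G.s e) w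

def Path.length {G : LPGraph} : ∀ {v w : G.V}, Path G v w → ℕ
  | _, _, .nil _ => 0
  | _, _, .cons _ p => p.length + 1

/-- The path contains no bifurcations among the sources of its edges. -/
def Path.NoBif {G : LPGraph} : ∀ {v w : G.V}, Path G v w → Prop
  | _, _, .nil _ => True
  | _, _, .cons e p => (∀ f : _, LPGraph.s _ f = LPGraph.s _ e → f = e) ∧ p.NoBif

end LPGraph

/-- Generators of the Leavitt path algebra: vertices, real edges and ghost edges. -/
inductive LGen (G : LPGraph) : Type
  | vertex : G.V → LGen G
  | edge : G.E → LGen G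
  | ghost : G.E → LGen G

variable (R : Type) [CommRing R] (G : LPGraph)

noncomputable def fv (v : G.V) : FreeAlgebra R (LGen G) := FreeAlgebra.ι R (LGen.vertex v)
noncomputable def fe (e : G.E) : FreeAlgebra R (LGen G) := FreeAlgebra.ι R (LGen.edge e)
noncomputable def fg (e : G.E) : FreeAlgebra R (LGen G) := FreeAlgebra.ι R (LGen.ghost e)

/-- The defining relations of the Leavitt path algebra. -/
inductive LRel : FreeAlgebra R (LGen G) → FreeAlgebra R (LGen G) → Prop
  | idem (v : G.V) : LRel (fv R G v * fv R G v) (fv R G v)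
  | orth (v w : G.V) (h : v ≠ w) : LRel (fv R G v * fv R G w) 0
  | edge_src (e : G.E) : LRel (fv R G (G.s e) * fe R G e) (fe R G e)
  | edge_rng (e : G.E) : LRel (fe R G e * fv R G (G.r e)) (fe R G e)
  | ghost_rng (e : G.E) : LRel (fv R G (G.r e) * fg R G e) (fg R G e)
  | ghost_src (e : G.E) : LRel (fg R G e * fv R G (G.s e)) (fg R G e)
  | ck1_same (e : G.E) : LRel (fg R G e * fe R G e) (fv R G (G.r e))
  | ck1_diff (e f : G.E) (h : e ≠ f) : LRel (fg R G e * fe R G f) 0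
  | ck2 (v : G.V) (h1 : {e : G.E | G.s e = v}.Finite)
      (h2 : {e : G.E | G.s e = v}.Nonempty) :
      LRel (fv R G v) (∑ e ∈ h1.toFinset, fe R G e * fg R G e)

/-- The Leavitt path algebra `L_R(E)`. -/
abbrev LPA := RingQuot (LRel R G)

noncomputable def Xv (v : G.V) : LPA R G := RingQuot.mkAlgHom R (LRel R G) (fv R G v)
noncomputable def Xe (e : G.E) : LPA R G := RingQuot.mkAlgHom R (LRel R G) (fe R G e)
noncomputable def Xg (e : G.E) : LPA R G := RingQuot.mkAlgHom R (LRel R G) (fg R G e)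

open MulOpposite in
/-- The involution on `L_R(E)`, built from the universal property, sending
`v ↦ v`, `e ↦ e*`, `e* ↦ e` and reversing products. -/
noncomputable def preStar : FreeAlgebra R (LGen G) →ₐ[R] (LPA R G)ᵐᵒᵖ :=
  FreeAlgebra.lift R fun x => match x with
    | LGen.vertex v => op (Xv R G v)
    | LGen.edge e => op (Xg R G e)
    | LGen.ghost e => op (Xe R G e)

section starlemmas

lemma Xv_mul_self (v : G.V) : Xv R G v * Xv R G v = Xv R G v := by
  simpa only [Xv, map_mul] using RingQuot.mkAlgHom_rel R (LRel.idem (R := R) (G := G) v)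

lemma Xv_mul_Xv (v w : G.V) (h : v ≠ w) : Xv R G v * Xv R G w = 0 := by
  simpa only [Xv, map_mul, map_zero] using
    RingQuot.mkAlgHom_rel R (LRel.orth (R := R) (G := G) v w h)

lemma Xv_mul_Xe (e : G.E) : Xv R G (G.s e) * Xe R G e = Xe R G e := by
  simpa only [Xv, Xe, map_mul] using RingQuot.mkAlgHom_rel R (LRel.edge_src (R := R) (G := G) e)

lemma Xe_mul_Xv (e : G.E) : Xe R G e * Xv R G (G.r e) = Xe R G e := by
  simpa only [Xv, Xe, map_mul] using RingQuot.mkAlgHom_rel R (LRel.edge_rng (R := R) (G := G) e)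

lemma Xv_mul_Xg (e : G.E) : Xv R G (G.r e) * Xg R G e = Xg R G e := by
  simpa only [Xv, Xg, map_mul] using RingQuot.mkAlgHom_rel R (LRel.ghost_rng (R := R) (G := G) e)

lemma Xg_mul_Xv (e : G.E) : Xg R G e * Xv R G (G.s e) = Xg R G e := by
  simpa only [Xv, Xg, map_mul] using RingQuot.mkAlgHom_rel R (LRel.ghost_src (R := R) (G := G) e)

lemma Xg_mul_Xe_same (e : G.E) : Xg R G e * Xe R G e = Xv R G (G.r e) := by
  simpa only [Xv, Xe, Xg, map_mul] using
    RingQuot.mkAlgHom_rel R (LRel.ck1_same (R := R) (G := G) e)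

lemma Xg_mul_Xe_diff (e f : G.E) (h : e ≠ f) : Xg R G e * Xe R G f = 0 := by
  simpa only [Xe, Xg, map_mul, map_zero] using
    RingQuot.mkAlgHom_rel R (LRel.ck1_diff (R := R) (G := G) e f h)

lemma Xv_ck2 (v : G.V) (h1 : {e : G.E | G.s e = v}.Finite)
    (h2 : {e : G.E | G.s e = v}.Nonempty) :
    Xv R G v = ∑ e ∈ h1.toFinset, Xe R G e * Xg R G e := by
  simpa only [Xv, Xe, Xg, map_mul, map_sum] using
    RingQuot.mkAlgHom_rel R (LRel.ck2 (R := R) (G := G) v h1 h2)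

open MulOpposite in
lemma preStar_rel : ∀ ⦃a b : FreeAlgebra R (LGen G)⦄, LRel R G a b →
    preStar R G a = preStar R G b := by
  intro a b h
  induction h with
  | idem v =>
      simp only [map_mul, preStar, fv, FreeAlgebra.lift_ι_apply, ← op_mul]
      exact congrArg op (Xv_mul_self R G v)
  | orth v w h =>
      simp only [map_mul, map_zero, preStar, fv, FreeAlgebra.lift_ι_apply, ← op_mul]
      rw [Xv_mul_Xv R G w v h.symm]; rfl
  | edge_src e =>
      simp only [map_mul, preStar, fv, fe, FreeAlgebra.lift_ι_apply, ← op_mul]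
      exact congrArg op (Xg_mul_Xv R G e)
  | edge_rng e =>
      simp only [map_mul, preStar, fv, fe, FreeAlgebra.lift_ι_apply, ← op_mul]
      exact congrArg op (Xv_mul_Xg R G e)
  | ghost_rng e =>
      simp only [map_mul, preStar, fv, fg, FreeAlgebra.lift_ι_apply, ← op_mul]
      exact congrArg op (Xe_mul_Xv R G e)
  | ghost_src e =>
      simp only [map_mul, preStar, fv, fg, FreeAlgebra.lift_ι_apply, ← op_mul]
      exact congrArg op (Xv_mul_Xe R G e)
  | ck1_same e =>
      simp only [map_mul, preStar, fv, fe, fg, FreeAlgebra.lift_ι_apply, ← op_mul]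
      exact congrArg op (Xg_mul_Xe_same R G e)
  | ck1_diff e f h =>
      simp only [map_mul, map_zero, preStar, fe, fg, FreeAlgebra.lift_ι_apply, ← op_mul]
      rw [Xg_mul_Xe_diff R G f e h.symm]; rfl
  | ck2 v h1 h2 =>
      simp only [map_sum, map_mul, preStar, fv, fe, fg, FreeAlgebra.lift_ι_apply, ← op_mul,
        ← Finset.op_sum]
      exact congrArg op (Xv_ck2 R G v h1 h2)

end starlemmas

open MulOpposite in
noncomputable def starHom : LPA R G →ₐ[R] (LPA R G)ᵐᵒᵖ :=
  RingQuot.liftAlgHom R ⟨preStar R G, preStar_rel R G⟩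

/-- The canonical involution (`*`-operation) on `L_R(E)`. -/
noncomputable def lpaStar (x : LPA R G) : LPA R G := MulOpposite.unop (starHom R G x)

/-- The element of `L_R(E)` associated to a path (product of real edges;
a trivial path gives the vertex). -/
noncomputable def pathE : ∀ {v w : G.V}, G.Path v w → LPA R G
  | _, _, .nil v => Xv R G v
  | _, _, .cons e p => Xe R G e * pathE p

/-- The ghost element `α*` of `L_R(E)` associated to a path `α`. -/
noncomputable def pathG : ∀ {v w : G.V}, G.Path v w → LPA R G
  | _, _, .nil v => Xv R G v
  | _, _, .cons e p => pathG p * Xg R G e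

/-- The homogeneous lpaComponent of degree `k` of `L_R(E)`:
the `R`-span of elements `αβ*` with `|α| - |β| = k`. -/
noncomputable def lpaComponent (k : ℤ) : Submodule R (LPA R G) :=
  Submodule.span R {x : LPA R G |
    ∃ (v₁ v₂ w : G.V) (α : G.Path v₁ w) (β : G.Path v₂ w),
      (α.length : ℤ) - (β.length : ℤ) = k ∧ x = pathE R G α * pathG R G β}

/-- A two-sided ideal of `L_R(E)` is graded if each of its elements is an `R`-linear
combination of homogeneous elements belonging to the ideal. -/
def IsGraded (I : TwoSidedIdeal (LPA R G)) : Prop :=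
  ∀ x ∈ I, x ∈ Submodule.span R
    (⋃ k : ℤ, (I : Set (LPA R G)) ∩ (lpaComponent R G k : Set (LPA R G)))

/-- A basic ideal: `r • x ∈ I` with `r ≠ 0` implies `x ∈ I`, for `x` a vertex or an
element of the form `v - ∑ᵢ eᵢeᵢ*` with `s(eᵢ) = v`. -/
def IsBasic (I : TwoSidedIdeal (LPA R G)) : Prop :=
  (∀ (r : R) (v : G.V), r ≠ 0 → r • Xv R G v ∈ I → Xv R G v ∈ I) ∧
  (∀ (r : R) (v : G.V) (F : Finset G.E), r ≠ 0 → (∀ e ∈ F, G.s e = v) →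
    r • (Xv R G v - ∑ e ∈ F, Xe R G e * Xg R G e) ∈ I →
    (Xv R G v - ∑ e ∈ F, Xe R G e * Xg R G e) ∈ I)

/-- `v^H = v - ∑_{s(e)=v, r(e)∉H} ee*`. -/
noncomputable def vH (H : Set G.V) (v : G.V) : LPA R G :=
  Xv R G v - ∑ᶠ (e : G.E) (_ : G.s e = v ∧ G.r e ∉ H), Xe R G e * Xg R G e

/-- `I(H,S)`: the two-sided ideal generated by `{v : v ∈ H} ∪ {v^H : v ∈ S}`. -/
noncomputable def IHS (H S : Set G.V) : TwoSidedIdeal (LPA R G) :=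
  TwoSidedIdeal.span ((fun v => Xv R G v) '' H ∪ (fun v => vH R G H v) '' S)

/-- The quotient ring of `L_R(E)` by a two-sided ideal, as an `R`-algebra. -/
abbrev QuotLPA (I : TwoSidedIdeal (LPA R G)) := RingQuot (fun a b : LPA R G => a - b ∈ I)

/-- The quotient graph `E/(H,S)`. -/
def quotGraph (H S : Set G.V) (hH : G.Hereditary H) : LPGraph where
  V := {v : G.V // v ∉ H} ⊕ {v : G.V // v ∈ G.BH H ∧ v ∉ S}
  E := {e : G.E // G.r e ∉ H} ⊕ {e : G.E // G.r e ∈ G.BH H ∧ G.r e ∉ S}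
  s := fun x => match x with
    | Sum.inl e => Sum.inl ⟨G.s e.1, fun h => e.2 (hH e.1 h)⟩
    | Sum.inr e => Sum.inl ⟨G.s e.1, fun h => e.2.1.1 (hH e.1 h)⟩
  r := fun x => match x with
    | Sum.inl e => Sum.inl ⟨G.r e.1, e.2⟩
    | Sum.inr e => Sum.inr ⟨G.r e.1, e.2⟩


/-! ### Auxiliary development for the main theorem -/

section PathLemmas

variable (R : Type) [CommRing R] (G : LPGraph)

@[simp] lemma pathE_nil (v : G.V) : pathE R G (.nil v) = Xv R G v := rfl

@[simp] lemma pathE_cons (e : G.E) {w : G.V} (p : G.Path (G.r e) w) :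
    pathE R G (.cons e p) = Xe R G e * pathE R G p := rfl

@[simp] lemma pathG_nil (v : G.V) : pathG R G (.nil v) = Xv R G v := rfl

@[simp] lemma pathG_cons (e : G.E) {w : G.V} (p : G.Path (G.r e) w) :
    pathG R G (.cons e p) = pathG R G p * Xg R G e := rfl

lemma Xv_pathE : ∀ {v w : G.V} (p : G.Path v w), Xv R G v * pathE R G p = pathE R G p
  | _, _, .nil v => Xv_mul_self R G v
  | _, _, .cons e p => by rw [pathE_cons, ← mul_assoc, Xv_mul_Xe]

lemma pathE_Xv : ∀ {v w : G.V} (p : G.Path v w), pathE R G p * Xv R G w = pathE R G p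
  | _, _, .nil v => Xv_mul_self R G v
  | _, _, .cons e p => by rw [pathE_cons, mul_assoc, pathE_Xv]

lemma Xv_pathG : ∀ {v w : G.V} (p : G.Path v w), Xv R G w * pathG R G p = pathG R G p
  | _, _, .nil v => Xv_mul_self R G v
  | _, _, .cons e p => by rw [pathG_cons, ← mul_assoc, Xv_pathG]

lemma pathG_Xv : ∀ {v w : G.V} (p : G.Path v w), pathG R G p * Xv R G v = pathG R G p
  | _, _, .nil v => Xv_mul_self R G v
  | _, _, .cons e p => by rw [pathG_cons, mul_assoc, Xg_mul_Xv]

lemma Xv_pathE_ne {v w : G.V} (p : G.Path v w) {u : G.V} (h : u ≠ v) :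
    Xv R G u * pathE R G p = 0 := by
  rw [← Xv_pathE R G p, ← mul_assoc, Xv_mul_Xv R G u v h, zero_mul]

lemma Xe_pathE_ne {v w : G.V} (p : G.Path v w) {f : G.E} (h : G.r f ≠ v) :
    Xe R G f * pathE R G p = 0 := by
  rw [← Xv_pathE R G p, ← mul_assoc, ← Xe_mul_Xv R G f,
    mul_assoc (Xe R G f) (Xv R G (G.r f)) (Xv R G v), Xv_mul_Xv R G _ _ h, mul_zero, zero_mul]

end PathLemmas

namespace LPGraph.Path

def comp {G : LPGraph} : ∀ {u v w : G.V}, G.Path u v → G.Path v w → G.Path u w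
  | _, _, _, .nil _, q => q
  | _, _, _, .cons e p, q => .cons e (p.comp q)

lemma length_comp {G : LPGraph} : ∀ {u v w : G.V} (p : G.Path u v) (q : G.Path v w),
    (p.comp q).length = p.length + q.length
  | _, _, _, .nil _, q => (Nat.zero_add _).symm
  | _, _, _, .cons e p, q => by
    show (p.comp q).length + 1 = (p.length + 1) + q.length
    rw [length_comp p q]; omega

end LPGraph.Path

section CompLemmas

variable (R : Type) [CommRing R] (G : LPGraph)

lemma pathE_comp : ∀ {u v w : G.V} (p : G.Path u v) (q : G.Path v w),
    pathE R G (p.comp q) = pathE R G p * pathE R G q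
  | _, _, _, .nil v, q => by
    show pathE R G q = Xv R G v * pathE R G q
    rw [Xv_pathE]
  | _, _, _, .cons e p, q => by
    show Xe R G e * pathE R G (p.comp q) = (Xe R G e * pathE R G p) * pathE R G q
    rw [pathE_comp p q, mul_assoc]

lemma pathG_comp : ∀ {u v w : G.V} (p : G.Path u v) (q : G.Path v w),
    pathG R G (p.comp q) = pathG R G q * pathG R G p
  | _, _, _, .nil v, q => by
    show pathG R G q = pathG R G q * Xv R G v
    rw [pathG_Xv]
  | _, _, _, .cons e p, q => by
    show pathG R G (p.comp q) * Xg R G e = pathG R G q * (pathG R G p * Xg R G e)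
    rw [pathG_comp p q, mul_assoc]

def LPGraph.single {G : LPGraph} (e : G.E) : G.Path (G.s e) (G.r e) := .cons e (.nil _)

lemma pathE_single (e : G.E) : pathE R G (LPGraph.single e) = Xe R G e := by
  show Xe R G e * Xv R G (G.r e) = Xe R G e
  exact Xe_mul_Xv R G e

lemma pathG_single (e : G.E) : pathG R G (LPGraph.single e) = Xg R G e := by
  show Xv R G (G.r e) * Xg R G e = Xg R G e
  exact Xv_mul_Xg R G e

lemma length_single (e : G.E) : (LPGraph.single (G := G) e).length = 1 := rfl

lemma exists_snoc {v w : G.V} (α : G.Path v w) (e : G.E) (h : G.s e = w) :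
    ∃ γ : G.Path v (G.r e), pathE R G γ = pathE R G α * Xe R G e ∧
      pathG R G γ = Xg R G e * pathG R G α ∧ γ.length = α.length + 1 := by
  subst h
  exact ⟨α.comp (LPGraph.single e),
    by rw [pathE_comp, pathE_single],
    by rw [pathG_comp, pathG_single],
    by rw [LPGraph.Path.length_comp, length_single]⟩

end CompLemmas

section VHLemmas

variable (R : Type) [CommRing R] (G : LPGraph)

lemma vH_eq (H : Set G.V) (v : G.V) (hfin : {e : G.E | G.s e = v ∧ G.r e ∉ H}.Finite) :
    vH R G H v = Xv R G v - ∑ e ∈ hfin.toFinset, Xe R G e * Xg R G e := by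
  have h0 : (∑ᶠ (e : G.E) (_ : G.s e = v ∧ G.r e ∉ H), Xe R G e * Xg R G e) =
      ∑ᶠ e ∈ {e : G.E | G.s e = v ∧ G.r e ∉ H}, Xe R G e * Xg R G e := rfl
  rw [vH, h0, finsum_mem_eq_finite_toFinset_sum _ hfin]

lemma Xv_vH (H : Set G.V) (v : G.V) (hfin : {e : G.E | G.s e = v ∧ G.r e ∉ H}.Finite) :
    Xv R G v * vH R G H v = vH R G H v := by
  rw [vH_eq R G H v hfin, mul_sub, Xv_mul_self, Finset.mul_sum]
  congr 1
  refine Finset.sum_congr rfl fun e he => ?_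
  have hs : G.s e = v := (hfin.mem_toFinset.mp he).1
  rw [← mul_assoc, ← hs, Xv_mul_Xe]

lemma vH_Xv (H : Set G.V) (v : G.V) (hfin : {e : G.E | G.s e = v ∧ G.r e ∉ H}.Finite) :
    vH R G H v * Xv R G v = vH R G H v := by
  rw [vH_eq R G H v hfin, sub_mul, Xv_mul_self, Finset.sum_mul]
  congr 1
  refine Finset.sum_congr rfl fun e he => ?_
  have hs : G.s e = v := (hfin.mem_toFinset.mp he).1
  rw [mul_assoc, ← hs, Xg_mul_Xv]

lemma Xg_vH_of_ranH (H : Set G.V) (v : G.V)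
    (hfin : {e : G.E | G.s e = v ∧ G.r e ∉ H}.Finite) (f : G.E)
    (hs : G.s f = v) (hr : G.r f ∈ H) :
    Xg R G f * vH R G H v = Xg R G f := by
  rw [vH_eq R G H v hfin, mul_sub]
  have h1 : Xg R G f * Xv R G v = Xg R G f := by rw [← hs, Xg_mul_Xv]
  have h2 : (Xg R G f * ∑ e ∈ hfin.toFinset, Xe R G e * Xg R G e) = 0 := by
    rw [Finset.mul_sum]
    refine Finset.sum_eq_zero fun e he => ?_
    have hne : f ≠ e := fun h => (hfin.mem_toFinset.mp he).2 (h ▸ hr)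
    rw [← mul_assoc, Xg_mul_Xe_diff R G f e hne, zero_mul]
  rw [h1, h2, sub_zero]

lemma Xg_vH_of_ranNotH (H : Set G.V) (v : G.V)
    (hfin : {e : G.E | G.s e = v ∧ G.r e ∉ H}.Finite) (f : G.E)
    (hs : G.s f = v) (hr : G.r f ∉ H) :
    Xg R G f * vH R G H v = 0 := by
  rw [vH_eq R G H v hfin, mul_sub]
  have h1 : Xg R G f * Xv R G v = Xg R G f := by rw [← hs, Xg_mul_Xv]
  have hf : f ∈ hfin.toFinset := hfin.mem_toFinset.mpr ⟨hs, hr⟩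
  have h2 : (Xg R G f * ∑ e ∈ hfin.toFinset, Xe R G e * Xg R G e) = Xg R G f := by
    rw [Finset.mul_sum, Finset.sum_eq_single_of_mem f hf]
    · rw [← mul_assoc, Xg_mul_Xe_same, Xv_mul_Xg]
    · intro e he hne
      rw [← mul_assoc, Xg_mul_Xe_diff R G f e (Ne.symm hne), zero_mul]
  rw [h1, h2, sub_self]

lemma Xg_vH_ne (H : Set G.V) (v : G.V)
    (hfin : {e : G.E | G.s e = v ∧ G.r e ∉ H}.Finite) (f : G.E) (hs : G.s f ≠ v) :
    Xg R G f * vH R G H v = 0 := by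
  rw [← Xv_vH R G H v hfin, ← mul_assoc]
  have h1 : Xg R G f * Xv R G v = 0 := by
    rw [← Xg_mul_Xv R G f, mul_assoc, Xv_mul_Xv R G _ _ hs, mul_zero]
  rw [h1, zero_mul]

end VHLemmas

section StarLemmas

variable (R : Type) [CommRing R] (G : LPGraph)

noncomputable def lpaStarL : LPA R G →ₗ[R] LPA R G :=
  (MulOpposite.opLinearEquiv R).symm.toLinearMap ∘ₗ (starHom R G).toLinearMap

lemma lpaStar_eq (x : LPA R G) : lpaStar R G x = lpaStarL R G x := rfl

lemma lpaStar_mul (x y : LPA R G) :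
    lpaStar R G (x * y) = lpaStar R G y * lpaStar R G x := by
  unfold lpaStar
  rw [map_mul, MulOpposite.unop_mul]

lemma lpaStar_add (x y : LPA R G) :
    lpaStar R G (x + y) = lpaStar R G x + lpaStar R G y := by
  unfold lpaStar
  rw [map_add, MulOpposite.unop_add]

lemma lpaStar_algebraMap (r : R) :
    lpaStar R G (algebraMap R (LPA R G) r) = algebraMap R (LPA R G) r := by
  unfold lpaStar
  rw [AlgHom.commutes]
  rfl

lemma lpaStar_Xv (v : G.V) : lpaStar R G (Xv R G v) = Xv R G v := by
  unfold lpaStar starHom Xv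
  rw [RingQuot.liftAlgHom_mkAlgHom_apply]
  show MulOpposite.unop (FreeAlgebra.lift R _ (FreeAlgebra.ι R (LGen.vertex v))) = _
  rw [FreeAlgebra.lift_ι_apply]
  rfl

lemma lpaStar_Xe (e : G.E) : lpaStar R G (Xe R G e) = Xg R G e := by
  unfold lpaStar starHom Xe
  rw [RingQuot.liftAlgHom_mkAlgHom_apply]
  show MulOpposite.unop (FreeAlgebra.lift R _ (FreeAlgebra.ι R (LGen.edge e))) = _
  rw [FreeAlgebra.lift_ι_apply]
  rfl

lemma lpaStar_Xg (e : G.E) : lpaStar R G (Xg R G e) = Xe R G e := by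
  unfold lpaStar starHom Xg
  rw [RingQuot.liftAlgHom_mkAlgHom_apply]
  show MulOpposite.unop (FreeAlgebra.lift R _ (FreeAlgebra.ι R (LGen.ghost e))) = _
  rw [FreeAlgebra.lift_ι_apply]
  rfl

lemma lpaStar_pathE : ∀ {v w : G.V} (p : G.Path v w),
    lpaStar R G (pathE R G p) = pathG R G p
  | _, _, .nil v => lpaStar_Xv R G v
  | _, _, .cons e p => by
    rw [pathE_cons, lpaStar_mul, lpaStar_Xe, lpaStar_pathE p, pathG_cons]

lemma lpaStar_pathG : ∀ {v w : G.V} (p : G.Path v w),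
    lpaStar R G (pathG R G p) = pathE R G p
  | _, _, .nil v => lpaStar_Xv R G v
  | _, _, .cons e p => by
    rw [pathG_cons, lpaStar_mul, lpaStar_Xg, lpaStar_pathG p, pathE_cons]

lemma lpaStar_vH (H : Set G.V) (v : G.V)
    (hfin : {e : G.E | G.s e = v ∧ G.r e ∉ H}.Finite) :
    lpaStar R G (vH R G H v) = vH R G H v := by
  rw [vH_eq R G H v hfin, lpaStar_eq, map_sub, map_sum]
  rw [show lpaStarL R G (Xv R G v) = Xv R G v from lpaStar_Xv R G v]
  congr 1
  refine Finset.sum_congr rfl fun e _ => ?_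
  show lpaStar R G (Xe R G e * Xg R G e) = _
  rw [lpaStar_mul, lpaStar_Xe, lpaStar_Xg]

lemma lpaStar_lpaStar (x : LPA R G) : lpaStar R G (lpaStar R G x) = x := by
  obtain ⟨y, rfl⟩ := RingQuot.mkAlgHom_surjective R (LRel R G) x
  induction y using FreeAlgebra.induction with
  | grade0 r =>
    rw [AlgHom.commutes, lpaStar_algebraMap, lpaStar_algebraMap]
  | grade1 g =>
    cases g with
    | vertex v =>
      show lpaStar R G (lpaStar R G (Xv R G v)) = Xv R G v
      rw [lpaStar_Xv, lpaStar_Xv]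
    | edge e =>
      show lpaStar R G (lpaStar R G (Xe R G e)) = Xe R G e
      rw [lpaStar_Xe, lpaStar_Xg]
    | ghost e =>
      show lpaStar R G (lpaStar R G (Xg R G e)) = Xg R G e
      rw [lpaStar_Xg, lpaStar_Xe]
  | mul a b ha hb =>
    rw [map_mul, lpaStar_mul, lpaStar_mul, ha, hb]
  | add a b ha hb =>
    rw [map_add, lpaStar_add, lpaStar_add, ha, hb]

end StarLemmas

section GenSet

variable (R : Type) [CommRing R] (G : LPGraph)

/-- The generating set of the span description of `I(H,S)`. -/
def genSet (H S : Set G.V) : Set (LPA R G) :=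
  {x : LPA R G | ∃ (v₁ v₂ w : G.V), w ∈ H ∧
      ∃ (α : G.Path v₁ w) (β : G.Path v₂ w), x = pathE R G α * pathG R G β} ∪
  {x : LPA R G | ∃ (v₁ v₂ w : G.V), w ∈ S ∧
      ∃ (α : G.Path v₁ w) (β : G.Path v₂ w),
        x = pathE R G α * vH R G H w * pathG R G β}

lemma genSet_subset_IHS (H S : Set G.V) :
    genSet R G H S ⊆ (IHS R G H S : Set (LPA R G)) := by
  rintro x (⟨v₁, v₂, w, hw, α, β, rfl⟩ | ⟨v₁, v₂, w, hw, α, β, rfl⟩)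
  · have hXv : Xv R G w ∈ IHS R G H S :=
      TwoSidedIdeal.subset_span (Or.inl ⟨w, hw, rfl⟩)
    have h1 : Xv R G w * pathG R G β ∈ IHS R G H S :=
      (IHS R G H S).mul_mem_right _ _ hXv
    have h2 := (IHS R G H S).mul_mem_left (pathE R G α) _ h1
    rwa [← mul_assoc, pathE_Xv] at h2
  · have hvH : vH R G H w ∈ IHS R G H S :=
      TwoSidedIdeal.subset_span (Or.inr ⟨w, hw, rfl⟩)
    exact (IHS R G H S).mul_mem_right _ _ ((IHS R G H S).mul_mem_left _ _ hvH)

lemma span_genSet_le (H S : Set G.V) :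
    ∀ x ∈ Submodule.span R (genSet R G H S), x ∈ IHS R G H S := by
  intro x hx
  induction hx using Submodule.span_induction with
  | mem x h => exact genSet_subset_IHS R G H S h
  | zero => exact (IHS R G H S).zero_mem
  | add x y _ _ hx hy => exact (IHS R G H S).add_mem hx hy
  | smul r x _ hx =>
    rw [Algebra.smul_def]
    exact (IHS R G H S).mul_mem_left _ _ hx

lemma Xv_mul_gen (H S : Set G.V) (u : G.V) {x : LPA R G} (hx : x ∈ genSet R G H S) :
    Xv R G u * x ∈ Submodule.span R (genSet R G H S) := by
  rcases hx with ⟨v₁, v₂, w, hw, α, β, rfl⟩ | ⟨v₁, v₂, w, hw, α, β, rfl⟩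
  · by_cases h : u = v₁
    · subst h
      rw [← mul_assoc, Xv_pathE]
      exact Submodule.subset_span (Or.inl ⟨u, v₂, w, hw, α, β, rfl⟩)
    · rw [← mul_assoc, Xv_pathE_ne R G α h, zero_mul]
      exact Submodule.zero_mem _
  · by_cases h : u = v₁
    · subst h
      rw [← mul_assoc, ← mul_assoc, Xv_pathE]
      exact Submodule.subset_span (Or.inr ⟨u, v₂, w, hw, α, β, rfl⟩)
    · rw [← mul_assoc, ← mul_assoc, Xv_pathE_ne R G α h, zero_mul, zero_mul]
      exact Submodule.zero_mem _

lemma Xe_mul_gen (H S : Set G.V) (f : G.E) {x : LPA R G} (hx : x ∈ genSet R G H S) :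
    Xe R G f * x ∈ Submodule.span R (genSet R G H S) := by
  rcases hx with ⟨v₁, v₂, w, hw, α, β, rfl⟩ | ⟨v₁, v₂, w, hw, α, β, rfl⟩
  · by_cases h : G.r f = v₁
    · subst h
      rw [← mul_assoc, ← pathE_cons]
      exact Submodule.subset_span (Or.inl ⟨G.s f, v₂, w, hw, .cons f α, β, rfl⟩)
    · rw [← mul_assoc, Xe_pathE_ne R G α h, zero_mul]
      exact Submodule.zero_mem _
  · by_cases h : G.r f = v₁
    · subst h
      rw [← mul_assoc, ← mul_assoc, ← pathE_cons]
      exact Submodule.subset_span (Or.inr ⟨G.s f, v₂, w, hw, .cons f α, β, rfl⟩)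
    · rw [← mul_assoc, ← mul_assoc, Xe_pathE_ne R G α h, zero_mul, zero_mul]
      exact Submodule.zero_mem _

lemma Xg_mul_gen1 (H S : Set G.V) (hH : G.Hereditary H) (f : G.E) :
    ∀ {v₁ w : G.V} (α : G.Path v₁ w), w ∈ H → ∀ {v₂ : G.V} (β : G.Path v₂ w),
      Xg R G f * (pathE R G α * pathG R G β) ∈ Submodule.span R (genSet R G H S)
  | _, _, .nil w, hw, v₂, β => by
    rw [pathE_nil]
    by_cases h : G.s f = w
    · obtain ⟨γ, _, hG, _⟩ := exists_snoc R G β f h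
      have h1 : Xg R G f * Xv R G w = Xg R G f := by rw [← h, Xg_mul_Xv]
      rw [← mul_assoc, h1, ← hG]
      refine Submodule.subset_span (Or.inl ⟨G.r f, v₂, G.r f, hH f (by rw [h]; exact hw),
        .nil _, γ, ?_⟩)
      rw [pathE_nil, Xv_pathG]
    · have h1 : Xg R G f * Xv R G w = 0 := by
        rw [← Xg_mul_Xv R G f, mul_assoc, Xv_mul_Xv R G _ _ h, mul_zero]
      rw [← mul_assoc, h1, zero_mul]
      exact Submodule.zero_mem _
  | _, _, .cons e α, hw, v₂, β => by
    rw [pathE_cons, mul_assoc, ← mul_assoc (Xg R G f)]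
    by_cases h : f = e
    · subst h
      rw [Xg_mul_Xe_same, ← mul_assoc, Xv_pathE]
      exact Submodule.subset_span (Or.inl ⟨_, v₂, _, hw, α, β, rfl⟩)
    · rw [Xg_mul_Xe_diff R G f e h, zero_mul]
      exact Submodule.zero_mem _

lemma Xg_mul_gen2 (H S : Set G.V) (hS : S ⊆ G.BH H) (f : G.E) :
    ∀ {v₁ w : G.V} (α : G.Path v₁ w), w ∈ S → ∀ {v₂ : G.V} (β : G.Path v₂ w),
      Xg R G f * (pathE R G α * vH R G H w * pathG R G β) ∈
        Submodule.span R (genSet R G H S)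
  | _, _, .nil w, hw, v₂, β => by
    have hfin : {e : G.E | G.s e = w ∧ G.r e ∉ H}.Finite := (hS hw).2.2.1
    rw [pathE_nil, Xv_vH R G H w hfin]
    by_cases h : G.s f = w
    · by_cases hr : G.r f ∈ H
      · obtain ⟨γ, _, hG, _⟩ := exists_snoc R G β f h
        rw [← mul_assoc, Xg_vH_of_ranH R G H w hfin f h hr, ← hG]
        refine Submodule.subset_span (Or.inl ⟨G.r f, v₂, G.r f, hr, .nil _, γ, ?_⟩)
        rw [pathE_nil, Xv_pathG]
      · rw [← mul_assoc, Xg_vH_of_ranNotH R G H w hfin f h hr, zero_mul]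
        exact Submodule.zero_mem _
    · rw [← mul_assoc, Xg_vH_ne R G H w hfin f h, zero_mul]
      exact Submodule.zero_mem _
  | _, _, .cons e α, hw, v₂, β => by
    rw [pathE_cons, mul_assoc, mul_assoc, ← mul_assoc (Xg R G f)]
    by_cases h : f = e
    · subst h
      rw [Xg_mul_Xe_same, ← mul_assoc, Xv_pathE]
      exact Submodule.subset_span (Or.inr ⟨_, v₂, _, hw, α, β, by rw [mul_assoc]⟩)
    · rw [Xg_mul_Xe_diff R G f e h, zero_mul]
      exact Submodule.zero_mem _

lemma mul_left_mem (H S : Set G.V) (hH : G.Hereditary H) (hS : S ⊆ G.BH H)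
    (a : LPA R G) : ∀ u ∈ Submodule.span R (genSet R G H S),
      a * u ∈ Submodule.span R (genSet R G H S) := by
  obtain ⟨x, rfl⟩ := RingQuot.mkAlgHom_surjective R (LRel R G) a
  induction x using FreeAlgebra.induction with
  | grade0 r =>
    intro u hu
    rw [AlgHom.commutes, ← Algebra.smul_def]
    exact Submodule.smul_mem _ r hu
  | grade1 g =>
    intro u hu
    induction hu using Submodule.span_induction with
    | mem x h =>
      cases g with
      | vertex v => exact Xv_mul_gen R G H S v h
      | edge e => exact Xe_mul_gen R G H S e h
      | ghost e =>
        rcases h with ⟨v₁, v₂, w, hw, α, β, rfl⟩ | ⟨v₁, v₂, w, hw, α, β, rfl⟩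
        · exact Xg_mul_gen1 R G H S hH e α hw β
        · exact Xg_mul_gen2 R G H S hS e α hw β
    | zero =>
      rw [mul_zero]; exact Submodule.zero_mem _
    | add x y _ _ hx hy =>
      rw [mul_add]; exact Submodule.add_mem _ hx hy
    | smul r x _ hx =>
      rw [mul_smul_comm]; exact Submodule.smul_mem _ r hx
  | mul x y hx hy =>
    intro u hu
    rw [map_mul, mul_assoc]
    exact hx _ (hy _ hu)
  | add x y hx hy =>
    intro u hu
    rw [map_add, add_mul]
    exact Submodule.add_mem _ (hx u hu) (hy u hu)

lemma star_genSet (H S : Set G.V) (hS : S ⊆ G.BH H) {x : LPA R G}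
    (hx : x ∈ genSet R G H S) : lpaStar R G x ∈ genSet R G H S := by
  rcases hx with ⟨v₁, v₂, w, hw, α, β, rfl⟩ | ⟨v₁, v₂, w, hw, α, β, rfl⟩
  · rw [lpaStar_mul, lpaStar_pathE, lpaStar_pathG]
    exact Or.inl ⟨v₂, v₁, w, hw, β, α, rfl⟩
  · have hfin : {e : G.E | G.s e = w ∧ G.r e ∉ H}.Finite := (hS hw).2.2.1
    rw [lpaStar_mul, lpaStar_mul, lpaStar_pathE, lpaStar_pathG, lpaStar_vH R G H w hfin]
    exact Or.inr ⟨v₂, v₁, w, hw, β, α, by rw [mul_assoc]⟩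

lemma star_span (H S : Set G.V) (hS : S ⊆ G.BH H) {x : LPA R G}
    (hx : x ∈ Submodule.span R (genSet R G H S)) :
    lpaStar R G x ∈ Submodule.span R (genSet R G H S) := by
  have hmap : Submodule.map (lpaStarL R G) (Submodule.span R (genSet R G H S)) ≤
      Submodule.span R (genSet R G H S) := by
    rw [Submodule.map_span]
    refine Submodule.span_le.mpr ?_
    rintro _ ⟨y, hy, rfl⟩
    exact Submodule.subset_span (star_genSet R G H S hS hy)
  exact hmap ⟨x, hx, rfl⟩

lemma mul_right_mem (H S : Set G.V) (hH : G.Hereditary H) (hS : S ⊆ G.BH H)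
    (a : LPA R G) : ∀ u ∈ Submodule.span R (genSet R G H S),
      u * a ∈ Submodule.span R (genSet R G H S) := by
  intro u hu
  have h1 : lpaStar R G a * lpaStar R G u ∈ Submodule.span R (genSet R G H S) :=
    mul_left_mem R G H S hH hS _ _ (star_span R G H S hS hu)
  have h2 := star_span R G H S hS h1
  rwa [← lpaStar_mul, lpaStar_lpaStar] at h2

end GenSet

/-- `I(H,S)` equals the `R`-span of `{αβ* : r(α)=r(β) ∈ H} ∪ {α v^H β* : r(α)=r(β)=v ∈ S}`,
and it is a self-adjoint graded ideal of `L_R(E)`. -/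
theorem IHS_span_graded_selfAdjoint (G : LPGraph) (R : Type) [CommRing R]
    (H S : Set G.V) (hAdm : G.Admissible H S) :
    (IHS R G H S : Set (LPA R G)) =
      ↑(Submodule.span R
        ({x : LPA R G | ∃ (v₁ v₂ w : G.V), w ∈ H ∧
            ∃ (α : G.Path v₁ w) (β : G.Path v₂ w), x = pathE R G α * pathG R G β} ∪
         {x : LPA R G | ∃ (v₁ v₂ w : G.V), w ∈ S ∧
            ∃ (α : G.Path v₁ w) (β : G.Path v₂ w),
              x = pathE R G α * vH R G H w * pathG R G β})) ∧
    IsGraded R G (IHS R G H S) ∧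
    (∀ x ∈ IHS R G H S, lpaStar R G x ∈ IHS R G H S) := by
  obtain ⟨hH, hSat, hS⟩ := hAdm
  -- The two-sided ideal structure on the span of `genSet`.
  have hIHS_le : ∀ x ∈ IHS R G H S, x ∈ Submodule.span R (genSet R G H S) := by
    intro x hx
    rw [IHS, TwoSidedIdeal.mem_span_iff] at hx
    have h1 := hx (TwoSidedIdeal.mk'
      (Submodule.span R (genSet R G H S) : Set (LPA R G))
      (Submodule.zero_mem _)
      (fun hx hy => Submodule.add_mem _ hx hy)
      (fun hx => Submodule.neg_mem _ hx)
      (fun {a b} hy => mul_left_mem R G H S hH hS a b hy)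
      (fun {a b} hx => mul_right_mem R G H S hH hS b a hx)) ?_
    · rwa [TwoSidedIdeal.mem_mk'] at h1
    · rintro y (⟨v, hv, rfl⟩ | ⟨v, hv, rfl⟩) <;> rw [TwoSidedIdeal.coe_mk'] <;> rw [SetLike.mem_coe]
      · exact Submodule.subset_span
          (Or.inl ⟨v, v, v, hv, .nil v, .nil v, (Xv_mul_self R G v).symm⟩)
      · have hfin : {e : G.E | G.s e = v ∧ G.r e ∉ H}.Finite := (hS hv).2.2.1
        refine Submodule.subset_span (Or.inr ⟨v, v, v, hv, .nil v, .nil v, ?_⟩)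
        show vH R G H v = pathE R G (LPGraph.Path.nil v) * vH R G H v * pathG R G (LPGraph.Path.nil v)
        rw [pathE_nil, pathG_nil, Xv_vH R G H v hfin, vH_Xv R G H v hfin]
  have key : (IHS R G H S : Set (LPA R G)) =
      ↑(Submodule.span R (genSet R G H S)) :=
    Set.ext fun x => ⟨fun hx => hIHS_le x hx, fun hx => span_genSet_le R G H S x hx⟩
  refine ⟨key, ?_, ?_⟩
  · -- graded
    intro x hx
    have hx' : x ∈ Submodule.span R (genSet R G H S) := hIHS_le x hx
    refine Submodule.span_mono ?_ hx'
    rintro y (⟨v₁, v₂, w, hw, α, β, rfl⟩ | ⟨v₁, v₂, w, hw, α, β, rfl⟩)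
    · refine Set.mem_iUnion.mpr ⟨(α.length : ℤ) - β.length,
        genSet_subset_IHS R G H S (Or.inl ⟨v₁, v₂, w, hw, α, β, rfl⟩), ?_⟩
      exact Submodule.subset_span ⟨v₁, v₂, w, α, β, rfl, rfl⟩
    · have hfin : {e : G.E | G.s e = w ∧ G.r e ∉ H}.Finite := (hS hw).2.2.1
      refine Set.mem_iUnion.mpr ⟨(α.length : ℤ) - β.length,
        genSet_subset_IHS R G H S (Or.inr ⟨v₁, v₂, w, hw, α, β, rfl⟩), ?_⟩
      show pathE R G α * vH R G H w * pathG R G β ∈ lpaComponent R G _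
      rw [vH_eq R G H w hfin, mul_sub, sub_mul, pathE_Xv, Finset.mul_sum, Finset.sum_mul]
      refine Submodule.sub_mem _ ?_ ?_
      · exact Submodule.subset_span ⟨v₁, v₂, w, α, β, rfl, rfl⟩
      · refine Submodule.sum_mem _ fun e he => ?_
        have hse : G.s e = w := (hfin.mem_toFinset.mp he).1
        obtain ⟨γ, hEγ, _, hlγ⟩ := exists_snoc R G α e hse
        obtain ⟨δ, _, hGδ, hlδ⟩ := exists_snoc R G β e hse
        refine Submodule.subset_span ⟨v₁, v₂, G.r e, γ, δ, ?_, ?_⟩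
        · rw [hlγ, hlδ]; push_cast; ring
        · rw [hEγ, hGδ]; simp only [mul_assoc]
  · -- self-adjoint
    intro x hx
    exact span_genSet_le R G H S _ (star_span R G H S hS (hIHS_le x hx))
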